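/- For the closed 2-form ω_s = (4x³ − 2xs + t)(dt∧dx + dy∧dz) + (2y − 2z) dt∧dy + (12x² − 2s + 2)y dz∧dx − (2z + y) dt∧dz − (12x² − 2s + 1)·2z dx∧dy on ℝ⁴, the exterior derivative dω_s vanishes identically, and the zero set of ω_s equals {(t,x,y,z) : 4x³ − 2xs + t = 0, y = 0, z = 0}, the critical point set of the flipping model F_s(t,x,y,z) = (t, x⁴ − sx² + tx + y² − z²). -/

import Mathlib

noncomputable def pT (f : ℝ → ℝ → ℝ → ℝ → ℝ) (t x y z : ℝ) : ℝ :=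
  deriv (fun u => f u x y z) t
noncomputable def pX (f : ℝ → ℝ → ℝ → ℝ → ℝ) (t x y z : ℝ) : ℝ :=
  deriv (fun u => f t u y z) x
noncomputable def pY (f : ℝ → ℝ → ℝ → ℝ → ℝ) (t x y z : ℝ) : ℝ :=
  deriv (fun u => f t x u z) y
noncomputable def pZ (f : ℝ → ℝ → ℝ → ℝ → ℝ) (t x y z : ℝ) : ℝ :=
  deriv (fun u => f t x y u) z

/-! Coefficients of
`ω_s = (4x³ − 2xs + t)(dt∧dx + dy∧dz) + (2y − 2z) dt∧dy + (12x² − 2s + 2)y dz∧dx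
       − (2z + y) dt∧dz − (12x² − 2s + 1)·2z dx∧dy`. -/
def Dtx (s : ℝ) : ℝ → ℝ → ℝ → ℝ → ℝ := fun t x _ _ => 4 * x ^ 3 - 2 * x * s + t
def Dty (s : ℝ) : ℝ → ℝ → ℝ → ℝ → ℝ := fun _ _ y z => 2 * y - 2 * z
def Dtz (s : ℝ) : ℝ → ℝ → ℝ → ℝ → ℝ := fun _ _ y z => -(2 * z + y)
def Dxy (s : ℝ) : ℝ → ℝ → ℝ → ℝ → ℝ := fun _ x _ z => -((12 * x ^ 2 - 2 * s + 1) * (2 * z))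
def Dxz (s : ℝ) : ℝ → ℝ → ℝ → ℝ → ℝ := fun _ x y _ => -((12 * x ^ 2 - 2 * s + 2) * y)
def Dyz (s : ℝ) : ℝ → ℝ → ℝ → ℝ → ℝ := fun t x _ _ => 4 * x ^ 3 - 2 * x * s + t

noncomputable def cT : (ℝ × ℝ × ℝ × ℝ) →L[ℝ] ℝ := ContinuousLinearMap.fst ℝ ℝ (ℝ × ℝ × ℝ)
noncomputable def cX : (ℝ × ℝ × ℝ × ℝ) →L[ℝ] ℝ :=
  (ContinuousLinearMap.fst ℝ ℝ (ℝ × ℝ)).comp (ContinuousLinearMap.snd ℝ ℝ (ℝ × ℝ × ℝ))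
noncomputable def cY : (ℝ × ℝ × ℝ × ℝ) →L[ℝ] ℝ :=
  ((ContinuousLinearMap.fst ℝ ℝ ℝ).comp (ContinuousLinearMap.snd ℝ ℝ (ℝ × ℝ))).comp
    (ContinuousLinearMap.snd ℝ ℝ (ℝ × ℝ × ℝ))
noncomputable def cZ : (ℝ × ℝ × ℝ × ℝ) →L[ℝ] ℝ :=
  ((ContinuousLinearMap.snd ℝ ℝ ℝ).comp (ContinuousLinearMap.snd ℝ ℝ (ℝ × ℝ))).comp
    (ContinuousLinearMap.snd ℝ ℝ (ℝ × ℝ × ℝ))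

noncomputable def Mmap (a b c d : ℝ) : (ℝ × ℝ × ℝ × ℝ) →L[ℝ] ℝ × ℝ :=
  cT.prod (a • cT + b • cX + c • cY + d • cZ)

lemma Mmap_apply (a b c d : ℝ) (v : ℝ × ℝ × ℝ × ℝ) :
    Mmap a b c d v = (v.1, a * v.1 + b * v.2.1 + c * v.2.2.1 + d * v.2.2.2) := by
  simp [Mmap, cT, cX, cY, cZ, smul_eq_mul]

lemma hasF (s : ℝ) (p : ℝ × ℝ × ℝ × ℝ) :
    HasFDerivAt (fun q : ℝ × ℝ × ℝ × ℝ =>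
        ((q.1, q.2.1 ^ 4 - s * q.2.1 ^ 2 + q.1 * q.2.1 + q.2.2.1 ^ 2 - q.2.2.2 ^ 2) : ℝ × ℝ))
      (Mmap p.2.1 (4 * p.2.1 ^ 3 - 2 * p.2.1 * s + p.1) (2 * p.2.2.1) (-(2 * p.2.2.2))) p := by
  have ht : HasFDerivAt (fun q : ℝ × ℝ × ℝ × ℝ => q.1) cT p := hasFDerivAt_fst
  have hx : HasFDerivAt (fun q : ℝ × ℝ × ℝ × ℝ => q.2.1) cX p :=
    hasFDerivAt_fst.comp p hasFDerivAt_snd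
  have hy : HasFDerivAt (fun q : ℝ × ℝ × ℝ × ℝ => q.2.2.1) cY p :=
    (hasFDerivAt_fst.comp p.2 hasFDerivAt_snd).comp p hasFDerivAt_snd
  have hz : HasFDerivAt (fun q : ℝ × ℝ × ℝ × ℝ => q.2.2.2) cZ p :=
    (hasFDerivAt_snd.comp p.2 hasFDerivAt_snd).comp p hasFDerivAt_snd
  have hx4 : HasFDerivAt (fun q : ℝ × ℝ × ℝ × ℝ => q.2.1 ^ 4) ((4 * p.2.1 ^ 3) • cX) p := by
    have := (hasDerivAt_pow 4 p.2.1).comp_hasFDerivAt p hx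
    simpa [Function.comp_def] using this
  have hx2 : HasFDerivAt (fun q : ℝ × ℝ × ℝ × ℝ => q.2.1 ^ 2) ((2 * p.2.1) • cX) p := by
    have := (hasDerivAt_pow 2 p.2.1).comp_hasFDerivAt p hx
    simpa [Function.comp_def] using this
  have hy2 : HasFDerivAt (fun q : ℝ × ℝ × ℝ × ℝ => q.2.2.1 ^ 2) ((2 * p.2.2.1) • cY) p := by
    have := (hasDerivAt_pow 2 p.2.2.1).comp_hasFDerivAt p hy
    simpa [Function.comp_def] using this
  have hz2 : HasFDerivAt (fun q : ℝ × ℝ × ℝ × ℝ => q.2.2.2 ^ 2) ((2 * p.2.2.2) • cZ) p := by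
    have := (hasDerivAt_pow 2 p.2.2.2).comp_hasFDerivAt p hz
    simpa [Function.comp_def] using this
  have hg := (((hx4.sub (hx2.const_mul s)).add (ht.mul hx)).add hy2).sub hz2
  have h := ht.prodMk hg
  refine HasFDerivAt.congr_fderiv h ?_
  apply ContinuousLinearMap.ext
  intro v
  have h1 := Mmap_apply p.2.1 (4 * p.2.1 ^ 3 - 2 * p.2.1 * s + p.1) (2 * p.2.2.1)
    (-(2 * p.2.2.2)) v
  rw [h1]
  refine Prod.ext ?_ ?_ <;>
    · simp [cT, cX, cY, cZ, smul_eq_mul]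
      try ring

lemma rank_lt_iff (a b c d : ℝ) :
    LinearMap.rank (Mmap a b c d).toLinearMap < 2 ↔ b = 0 ∧ c = 0 ∧ d = 0 := by
  constructor
  · intro h
    by_contra hc
    have hsurj : Function.Surjective (Mmap a b c d).toLinearMap := by
      intro w
      rcases w with ⟨u, w⟩
      by_cases hb : b = 0
      · by_cases hcc : c = 0
        · have hd : d ≠ 0 := by tauto
          refine ⟨(u, 0, 0, (w - a * u) / d), ?_⟩
          show Mmap a b c d (u, 0, 0, (w - a * u) / d) = (u, w)
          rw [Mmap_apply]
          simp [hb, hcc]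
          field_simp
          ring
        · refine ⟨(u, 0, (w - a * u) / c, 0), ?_⟩
          show Mmap a b c d (u, 0, (w - a * u) / c, 0) = (u, w)
          rw [Mmap_apply]
          simp [hb]
          field_simp
          ring
      · refine ⟨(u, (w - a * u) / b, 0, 0), ?_⟩
        show Mmap a b c d (u, (w - a * u) / b, 0, 0) = (u, w)
        rw [Mmap_apply]
        simp
        field_simp
        ring
    have hr := rank_range_of_surjective (Mmap a b c d).toLinearMap hsurj
    rw [LinearMap.rank, hr, rank_prod', Module.rank_self] at h
    norm_num at h
  · rintro ⟨hb, hc, hd⟩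
    have hle : LinearMap.range (Mmap a b c d).toLinearMap ≤
        Submodule.span ℝ {((1 : ℝ), a)} := by
      rintro w ⟨v, rfl⟩
      have : (Mmap a b c d).toLinearMap v = v.1 • ((1 : ℝ), a) := by
        show Mmap a b c d v = v.1 • ((1 : ℝ), a)
        rw [Mmap_apply, hb, hc, hd]
        simp [Prod.ext_iff]
        ring
      rw [this]
      exact Submodule.smul_mem _ _ (Submodule.mem_span_singleton_self _)
    calc LinearMap.rank (Mmap a b c d).toLinearMap
        ≤ Module.rank ℝ (Submodule.span ℝ {((1 : ℝ), a)}) := Submodule.rank_mono hle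
      _ ≤ 1 := by simpa using rank_span_le (R := ℝ) {((1 : ℝ), a)}
      _ < 2 := by norm_num

lemma deriv_lin (a b : ℝ) (x : ℝ) : deriv (fun u : ℝ => a * u + b) x = a := by
  have : HasDerivAt (fun u : ℝ => a * u + b) a x := by
    simpa using ((hasDerivAt_id x).const_mul a).add_const b
  exact this.deriv

/-- The 2-form `ω_s` of the flipping model is closed, and its zero set equals
`{4x³ − 2xs + t = 0, y = 0, z = 0}`, the critical point set of
`F_s(t,x,y,z) = (t, x⁴ − sx² + tx + y² − z²)`. -/
theorem stmt11 (s : ℝ) :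
    (∀ t x y z : ℝ,
      pT (Dxy s) t x y z - pX (Dty s) t x y z + pY (Dtx s) t x y z = 0 ∧
      pT (Dxz s) t x y z - pX (Dtz s) t x y z + pZ (Dtx s) t x y z = 0 ∧
      pT (Dyz s) t x y z - pY (Dtz s) t x y z + pZ (Dty s) t x y z = 0 ∧
      pX (Dyz s) t x y z - pY (Dxz s) t x y z + pZ (Dxy s) t x y z = 0) ∧
    {p : ℝ × ℝ × ℝ × ℝ |
        Dtx s p.1 p.2.1 p.2.2.1 p.2.2.2 = 0 ∧ Dty s p.1 p.2.1 p.2.2.1 p.2.2.2 = 0 ∧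
        Dtz s p.1 p.2.1 p.2.2.1 p.2.2.2 = 0 ∧ Dxy s p.1 p.2.1 p.2.2.1 p.2.2.2 = 0 ∧
        Dxz s p.1 p.2.1 p.2.2.1 p.2.2.2 = 0 ∧ Dyz s p.1 p.2.1 p.2.2.1 p.2.2.2 = 0} =
      {p : ℝ × ℝ × ℝ × ℝ |
        4 * p.2.1 ^ 3 - 2 * p.2.1 * s + p.1 = 0 ∧ p.2.2.1 = 0 ∧ p.2.2.2 = 0} ∧
    {p : ℝ × ℝ × ℝ × ℝ |
        4 * p.2.1 ^ 3 - 2 * p.2.1 * s + p.1 = 0 ∧ p.2.2.1 = 0 ∧ p.2.2.2 = 0} =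
      {p : ℝ × ℝ × ℝ × ℝ |
        LinearMap.rank (fderiv ℝ
          (fun q : ℝ × ℝ × ℝ × ℝ =>
            ((q.1, q.2.1 ^ 4 - s * q.2.1 ^ 2 + q.1 * q.2.1 + q.2.2.1 ^ 2 - q.2.2.2 ^ 2)
              : ℝ × ℝ)) p).toLinearMap < 2} := by
  refine ⟨?_, ?_, ?_⟩
  · intro t x y z
    have e1 : pT (Dxy s) t x y z = 0 := deriv_const _ _
    have e2 : pX (Dty s) t x y z = 0 := deriv_const _ _
    have e3 : pY (Dtx s) t x y z = 0 := deriv_const _ _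
    have e4 : pT (Dxz s) t x y z = 0 := deriv_const _ _
    have e5 : pX (Dtz s) t x y z = 0 := deriv_const _ _
    have e6 : pZ (Dtx s) t x y z = 0 := deriv_const _ _
    have e7 : pT (Dyz s) t x y z = 1 := by
      show deriv (fun u => 4 * x ^ 3 - 2 * x * s + u) t = 1
      have hf : (fun u : ℝ => 4 * x ^ 3 - 2 * x * s + u)
          = fun u : ℝ => 1 * u + (4 * x ^ 3 - 2 * x * s) := by funext u; ring
      rw [hf, deriv_lin]
    have e8 : pY (Dtz s) t x y z = -1 := by
      show deriv (fun u => -(2 * z + u)) y = -1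
      have hf : (fun u : ℝ => -(2 * z + u)) = fun u : ℝ => (-1) * u + (-(2 * z)) := by
        funext u; ring
      rw [hf, deriv_lin]
    have e9 : pZ (Dty s) t x y z = -2 := by
      show deriv (fun u => 2 * y - 2 * u) z = -2
      have hf : (fun u : ℝ => 2 * y - 2 * u) = fun u : ℝ => (-2) * u + 2 * y := by
        funext u; ring
      rw [hf, deriv_lin]
    have e10 : pX (Dyz s) t x y z = 12 * x ^ 2 - 2 * s := by
      show deriv (fun u => 4 * u ^ 3 - 2 * u * s + t) x = 12 * x ^ 2 - 2 * s
      have hf : (fun u : ℝ => 4 * u ^ 3 - 2 * u * s + t)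
          = fun u : ℝ => 4 * u ^ 3 - 2 * (u * s) + t := by funext u; ring
      rw [hf]
      have h := (((hasDerivAt_pow 3 x).const_mul 4).sub
        (((hasDerivAt_id' x).mul_const s).const_mul 2)).add_const t
      rw [show deriv (fun u : ℝ => 4 * u ^ 3 - 2 * (u * s) + t) x = _ from h.deriv]
      norm_num
      ring
    have e11 : pY (Dxz s) t x y z = -(12 * x ^ 2 - 2 * s + 2) := by
      show deriv (fun u => -((12 * x ^ 2 - 2 * s + 2) * u)) y = -(12 * x ^ 2 - 2 * s + 2)
      have hf : (fun u : ℝ => -((12 * x ^ 2 - 2 * s + 2) * u))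
          = fun u : ℝ => (-(12 * x ^ 2 - 2 * s + 2)) * u + 0 := by funext u; ring
      rw [hf, deriv_lin]
    have e12 : pZ (Dxy s) t x y z = -((12 * x ^ 2 - 2 * s + 1) * 2) := by
      show deriv (fun u => -((12 * x ^ 2 - 2 * s + 1) * (2 * u))) z
          = -((12 * x ^ 2 - 2 * s + 1) * 2)
      have hf : (fun u : ℝ => -((12 * x ^ 2 - 2 * s + 1) * (2 * u)))
          = fun u : ℝ => (-((12 * x ^ 2 - 2 * s + 1) * 2)) * u + 0 := by funext u; ring
      rw [hf, deriv_lin]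
    rw [e1, e2, e3, e4, e5, e6, e7, e8, e9, e10, e11, e12]
    refine ⟨by ring, by ring, by ring, by ring⟩
  · ext p
    simp only [Set.mem_setOf_eq, Dtx, Dty, Dtz, Dxy, Dxz, Dyz]
    constructor
    · rintro ⟨h1, h2, h3, -, -, -⟩
      exact ⟨h1, by linarith, by linarith⟩
    · rintro ⟨h1, h2, h3⟩
      rw [h2, h3]
      exact ⟨h1, by ring, by ring, by ring, by ring, h1⟩
  · ext p
    simp only [Set.mem_setOf_eq]
    rw [(hasF s p).fderiv, rank_lt_iff]
    constructor
    · rintro ⟨h1, h2, h3⟩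
      exact ⟨h1, by linarith, by linarith⟩
    · rintro ⟨h1, h2, h3⟩
      exact ⟨h1, by linarith, by linarith⟩
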